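/- The series \sum_{k=1}^{\infty} 1/(k \binom{2k}{k}) equals L_{-3}(1), where L_{-3}(s) = \sum_{n=0}^{\infty} (1/(3n+1)^s - 1/(3n+2)^s). -/

import Mathlib

open Real MeasureTheory intervalIntegral Set


lemma prod_fact (a b : ℕ) :
    (∏ j ∈ Finset.range (b + 1), (a + 1 + j)) * a.factorial = (a + b + 1).factorial := by
  induction b with
  | zero => simp [Nat.factorial_succ]
  | succ n ih =>
    rw [Finset.prod_range_succ, mul_comm (∏ x ∈ Finset.range (n+1), (a + 1 + x)) _, mul_assoc, ih]
    have h2 : a + (n + 1) + 1 = (a + n + 1) + 1 := by ring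
    rw [h2, Nat.factorial_succ]
    have : a + 1 + (n + 1) = (a + n + 1) + 1 := by ring
    rw [this, ← Nat.factorial_succ, ← Nat.factorial_succ]

lemma beta_nat (a b : ℕ) :
    ∫ x in (0:ℝ)..1, x ^ a * (1 - x) ^ b
      = (a.factorial * b.factorial : ℝ) / ((a + b + 1).factorial) := by
  have hB := Complex.betaIntegral_eval_nat_add_one_right
    (u := (a : ℂ) + 1) (by simp; positivity) b
  rw [Complex.betaIntegral] at hB
  have hprod : (∏ j ∈ Finset.range (b + 1), ((a : ℂ) + 1 + j))
      = ((a + b + 1).factorial : ℂ) / (a.factorial : ℂ) := by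
    rw [eq_div_iff (by exact_mod_cast (Nat.factorial_pos a).ne')]
    calc (∏ j ∈ Finset.range (b + 1), ((a : ℂ) + 1 + j)) * (a.factorial : ℂ)
        = (((∏ j ∈ Finset.range (b + 1), (a + 1 + j)) * a.factorial : ℕ) : ℂ) := by
          push_cast; ring_nf
      _ = ((a + b + 1).factorial : ℂ) := by rw [prod_fact]
  have hint : (∫ x in (0:ℝ)..1, ((x:ℂ) ^ ((a:ℂ) + 1 - 1)) * ((1 - (x:ℂ)) ^ ((b:ℂ) + 1 - 1)))
      = ((∫ x in (0:ℝ)..1, x ^ a * (1 - x) ^ b : ℝ) : ℂ) := by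
    rw [← intervalIntegral.integral_ofReal]
    refine intervalIntegral.integral_congr fun x hx => ?_
    simp only [add_sub_cancel_right]
    rw [Complex.cpow_natCast, Complex.cpow_natCast]
    push_cast
    ring
  rw [hint, hprod] at hB
  have := congrArg Complex.re hB
  rw [Complex.ofReal_re] at this
  rw [this]
  have h1 : ((b.factorial : ℂ) / (((a + b + 1).factorial : ℂ) / (a.factorial : ℂ)))
      = (((a.factorial * b.factorial : ℝ) / ((a + b + 1).factorial) : ℝ) : ℂ) := by
    push_cast
    field_simp
  rw [h1, Complex.ofReal_re]


lemma sqrt3_pos : (0:ℝ) < Real.sqrt 3 := Real.sqrt_pos.mpr (by norm_num)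
lemma sq_sqrt3 : (Real.sqrt 3) ^ 2 = 3 := Real.sq_sqrt (by norm_num)

lemma hasDerivAt_F (c : ℝ) (hc : c ^ 2 = 1) (x : ℝ) :
    HasDerivAt (fun y : ℝ => 2 / Real.sqrt 3 * Real.arctan ((2 * y + c) / Real.sqrt 3))
      (1 / (x ^ 2 + c * x + 1)) x := by
  have h3 := sqrt3_pos
  have h := (Real.hasDerivAt_arctan ((2 * x + c) / Real.sqrt 3)).comp x
    (((hasDerivAt_id x).const_mul 2 |>.add_const c).div_const (Real.sqrt 3))
  have h2 := h.const_mul (2 / Real.sqrt 3)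
  refine h2.congr_deriv ?_
  have hs : Real.sqrt 3 ^ 2 = 3 := sq_sqrt3
  have hden : x ^ 2 + c * x + 1 > 0 := by nlinarith [sq_nonneg (2 * x + c), sq_nonneg (x - c)]
  field_simp
  rw [hs, eq_div_iff (by nlinarith)]
  nlinarith [sq_nonneg (2*x+c), hden, sq_nonneg x]

lemma cont_inv_quad (c : ℝ) (hc : c ^ 2 = 1) :
    Continuous (fun x : ℝ => 1 / (x ^ 2 + c * x + 1)) := by
  apply Continuous.div continuous_const (by continuity)
  intro x
  nlinarith [sq_nonneg (2 * x + c), sq_nonneg (x - c)]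

lemma int_quad (c : ℝ) (hc : c ^ 2 = 1) :
    ∫ x in (0:ℝ)..1, 1 / (x ^ 2 + c * x + 1)
      = 2 / Real.sqrt 3 * (Real.arctan ((2 + c) / Real.sqrt 3) - Real.arctan (c / Real.sqrt 3)) := by
  rw [intervalIntegral.integral_eq_sub_of_hasDerivAt (fun x _ => hasDerivAt_F c hc x)
    ((cont_inv_quad c hc).intervalIntegrable 0 1)]
  ring_nf

lemma arctan_two_mul : Real.arctan (Real.sqrt 3) = 2 * Real.arctan (Real.sqrt 3)⁻¹ := by
  have h3 := sqrt3_pos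
  have hs := sq_sqrt3
  set A := Real.arctan (Real.sqrt 3)⁻¹ with hA
  have hApos : 0 < A := by
    rw [hA, ← Real.arctan_zero]
    exact Real.arctan_strictMono (by positivity)
  have hAlt : A < π / 4 := by
    rw [hA, ← Real.arctan_one]
    apply Real.arctan_strictMono
    rw [inv_lt_one_iff₀]
    right; nlinarith
  have htan : Real.tan (2 * A) = Real.sqrt 3 := by
    rw [Real.tan_two_mul, Real.tan_arctan]
    rw [inv_pow, hs]
    field_simp
    nlinarith
  have := Real.arctan_tan (x := 2 * A) (by linarith [Real.pi_pos]) (by linarith)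
  rw [htan] at this
  linarith [this]

lemma key_integrals :
    ∫ x in (0:ℝ)..1, 1 / (x ^ 2 + (-1) * x + 1)
      = 2 * ∫ x in (0:ℝ)..1, 1 / (x ^ 2 + 1 * x + 1) := by
  have h3 := sqrt3_pos
  rw [int_quad (-1) (by norm_num), int_quad 1 (by norm_num)]
  have e1 : ((2:ℝ) + -1) / Real.sqrt 3 = (Real.sqrt 3)⁻¹ := by norm_num
  have e2 : ((-1:ℝ)) / Real.sqrt 3 = -(Real.sqrt 3)⁻¹ := by field_simp
  have e3 : ((2:ℝ) + 1) / Real.sqrt 3 = Real.sqrt 3 := by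
    rw [div_eq_iff h3.ne']; nlinarith [sq_sqrt3]
  have e4 : ((1:ℝ)) / Real.sqrt 3 = (Real.sqrt 3)⁻¹ := one_div _
  rw [e1, e2, e3, e4, Real.arctan_neg, arctan_two_mul]
  ring

theorem stmt_4 :
    (∑' k : ℕ, 1 / (((k + 1 : ℕ) : ℝ) * (Nat.choose (2 * (k + 1)) (k + 1) : ℝ))) =
      ∑' n : ℕ, (1 / ((3 * (n : ℝ) + 1)) - 1 / ((3 * (n : ℝ) + 2))) := by
  set μ := volume.restrict (Ioo (0:ℝ) 1) with hμ
  -- the two families of functions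
  set f : ℕ → ℝ → ℝ := fun k x => x ^ k * (1 - x) ^ (k + 1) with hf
  set g : ℕ → ℝ → ℝ := fun n x => x ^ (3 * n) - x ^ (3 * n + 1) with hg
  have hfc : ∀ k, Continuous (f k) := fun k => by continuity
  have hgc : ∀ n, Continuous (g n) := fun n => by continuity
  have hInt : ∀ (h : ℝ → ℝ), Continuous h → Integrable h μ := fun h hc => by
    rw [hμ]
    exact (hc.integrableOn_Icc (a := 0) (b := 1)).mono_set Ioo_subset_Icc_self
  -- integrals over Ioo equal interval integrals
  have hIoo : ∀ (h : ℝ → ℝ), ∫ x, h x ∂μ = ∫ x in (0:ℝ)..1, h x := fun h => by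
    rw [intervalIntegral.integral_of_le (by norm_num : (0:ℝ) ≤ 1),
      MeasureTheory.integral_Ioc_eq_integral_Ioo]
  -- value of ∫ f k
  have hfval : ∀ k : ℕ, ∫ x, f k x ∂μ
      = 1 / (((k + 1 : ℕ) : ℝ) * (Nat.choose (2 * (k + 1)) (k + 1) : ℝ)) := by
    intro k
    rw [hIoo, hf]
    simp only
    rw [beta_nat k (k + 1)]
    have hcmf := Nat.choose_mul_factorial_mul_factorial
      (show k + 1 ≤ 2 * (k + 1) by omega)
    have h2 : 2 * (k + 1) - (k + 1) = k + 1 := by omega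
    rw [h2] at hcmf
    have hcast : ((2 * (k + 1)).choose (k + 1) : ℝ) * (k + 1).factorial * (k + 1).factorial
        = (2 * (k + 1)).factorial := by exact_mod_cast congrArg (Nat.cast : ℕ → ℝ) hcmf
    have h3 : k + (k + 1) + 1 = 2 * (k + 1) := by omega
    rw [h3]
    have hkf : ((k + 1).factorial : ℝ) = (k + 1) * k.factorial := by
      exact_mod_cast congrArg (Nat.cast : ℕ → ℝ) (Nat.factorial_succ k)
    have hpos1 : (0:ℝ) < k.factorial := by exact_mod_cast k.factorial_pos
    have hpos2 : (0:ℝ) < (k+1).factorial := by exact_mod_cast (k+1).factorial_pos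
    have hpos3 : (0:ℝ) < (2*(k+1)).factorial := by exact_mod_cast (2*(k+1)).factorial_pos
    have hpos4 : (0:ℝ) < ((2 * (k + 1)).choose (k + 1) : ℝ) := by
      exact_mod_cast Nat.choose_pos (show k + 1 ≤ 2 * (k + 1) by omega)
    push_cast
    rw [div_eq_div_iff (by positivity) (by positivity)]
    push_cast at hcast hkf
    nlinarith [hcast, hkf]
  -- value of ∫ g n
  have hgval : ∀ n : ℕ, ∫ x, g n x ∂μ
      = 1 / (3 * (n : ℝ) + 1) - 1 / (3 * (n : ℝ) + 2) := by
    intro n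
    rw [hIoo, hg]
    simp only
    rw [intervalIntegral.integral_sub
      ((continuous_pow _).intervalIntegrable 0 1)
      ((continuous_pow _).intervalIntegrable 0 1),
      integral_pow, integral_pow]
    push_cast
    norm_num
    ring_nf
  -- summability of integrals of norms (LHS)
  have hfs : Summable (fun k => ∫ x, ‖f k x‖ ∂μ) := by
    refine Summable.of_nonneg_of_le
      (fun k => integral_nonneg (fun x => norm_nonneg _)) (fun k => ?_)
      (summable_geometric_of_lt_one (by norm_num : (0:ℝ) ≤ 1/4) (by norm_num))
    have hb : ∀ x ∈ Ioo (0:ℝ) 1, ‖f k x‖ ≤ (1/4 : ℝ) ^ k := by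
      intro x hx
      obtain ⟨hx0, hx1⟩ := hx
      rw [hf]
      simp only
      rw [Real.norm_of_nonneg (mul_nonneg (by positivity) (pow_nonneg (by linarith) _))]
      calc x ^ k * (1 - x) ^ (k + 1) = (x * (1 - x)) ^ k * (1 - x) := by
            rw [mul_pow, pow_succ]; ring
        _ ≤ (1/4 : ℝ) ^ k * 1 := by
            apply mul_le_mul _ (by linarith) (by linarith) (by positivity)
            exact pow_le_pow_left₀ (by nlinarith) (by nlinarith [sq_nonneg (2*x - 1)]) k
        _ = (1/4 : ℝ) ^ k := mul_one _
    calc ∫ x, ‖f k x‖ ∂μ ≤ ∫ _x, (1/4 : ℝ) ^ k ∂μ := by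
          rw [hμ]
          exact setIntegral_mono_on (hInt _ (hfc k)).norm
            (integrableOn_const (by simp [Real.volume_Ioo])) measurableSet_Ioo hb
      _ = (1/4 : ℝ) ^ k := by
          rw [MeasureTheory.integral_const, hμ, measureReal_restrict_apply_univ, Real.volume_real_Ioo]
          norm_num
  -- summability of integrals of norms (RHS)
  have hgnorm : ∀ n, ∫ x, ‖g n x‖ ∂μ = ∫ x, g n x ∂μ := by
    intro n
    rw [hμ]
    refine setIntegral_congr_fun measurableSet_Ioo (fun x hx => ?_)
    rw [hg]
    simp only
    rw [Real.norm_of_nonneg]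
    exact sub_nonneg.2 (pow_le_pow_of_le_one hx.1.le hx.2.le (by omega))
  have hgs : Summable (fun n => ∫ x, ‖g n x‖ ∂μ) := by
    have hsum2 : Summable (fun n : ℕ => 1 / ((n : ℝ) + 1) ^ 2) := by
      have h0 : Summable (fun n : ℕ => 1 / ((n : ℝ)) ^ 2) :=
        Real.summable_one_div_nat_pow.mpr one_lt_two
      have := (summable_nat_add_iff (f := fun n : ℕ => 1 / ((n : ℝ)) ^ 2) 1).mpr h0
      refine this.congr (fun n => ?_)
      push_cast
      ring_nf
    refine Summable.of_nonneg_of_le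
      (fun n => integral_nonneg (fun x => norm_nonneg _)) (fun n => ?_) hsum2
    rw [hgnorm n, hgval n]
    have h1 : (0:ℝ) < 3 * (n:ℝ) + 1 := by positivity
    have h2 : (0:ℝ) < 3 * (n:ℝ) + 2 := by positivity
    rw [div_sub_div _ _ h1.ne' h2.ne']
    rw [div_le_div_iff₀ (by positivity) (by positivity)]
    push_cast
    nlinarith [sq_nonneg ((n:ℝ))]
  -- exchange sum and integral
  have hLex := MeasureTheory.integral_tsum_of_summable_integral_norm
    (F := f) (μ := μ) (fun k => hInt _ (hfc k)) hfs
  have hRex := MeasureTheory.integral_tsum_of_summable_integral_norm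
    (F := g) (μ := μ) (fun n => hInt _ (hgc n)) hgs
  -- pointwise tsum values
  have hLpt : ∫ x, (∑' k, f k x) ∂μ = ∫ x, (1 - x) * (x ^ 2 - x + 1)⁻¹ ∂μ := by
    rw [hμ]
    refine setIntegral_congr_fun measurableSet_Ioo (fun x hx => ?_)
    obtain ⟨hx0, hx1⟩ := hx
    have he : ∀ k : ℕ, f k x = (1 - x) * (x * (1 - x)) ^ k := by
      intro k
      rw [hf]
      simp only
      rw [mul_pow, pow_succ]
      ring
    rw [tsum_congr he, tsum_mul_left,
      tsum_geometric_of_lt_one (by nlinarith) (by nlinarith)]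
    have : 1 - x * (1 - x) = x ^ 2 - x + 1 := by ring
    rw [this]
  have hRpt : ∫ x, (∑' n, g n x) ∂μ = ∫ x, (x ^ 2 + x + 1)⁻¹ ∂μ := by
    rw [hμ]
    refine setIntegral_congr_fun measurableSet_Ioo (fun x hx => ?_)
    obtain ⟨hx0, hx1⟩ := hx
    have he : ∀ n : ℕ, g n x = (1 - x) * (x ^ 3) ^ n := by
      intro n
      rw [hg]
      simp only
      rw [pow_succ, pow_mul]
      ring
    rw [tsum_congr he, tsum_mul_left,
      tsum_geometric_of_lt_one (by positivity) (pow_lt_one₀ hx0.le hx1 (by norm_num))]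
    have hfac : 1 - x ^ 3 = (1 - x) * (x ^ 2 + x + 1) := by ring
    rw [hfac, mul_inv, ← mul_assoc, mul_inv_cancel₀ (by linarith), one_mul]
  -- the integral identity
  have hII : ∫ x, (1 - x) * (x ^ 2 - x + 1)⁻¹ ∂μ = ∫ x, (x ^ 2 + x + 1)⁻¹ ∂μ := by
    rw [hIoo, hIoo]
    have hd : ∀ x : ℝ, (0:ℝ) < x ^ 2 - x + 1 := fun x => by nlinarith [sq_nonneg (2*x - 1)]
    have hd' : ∀ x : ℝ, (0:ℝ) < x ^ 2 + x + 1 := fun x => by nlinarith [sq_nonneg (2*x + 1)]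
    have hcden : Continuous (fun x : ℝ => x ^ 2 - x + 1) :=
      ((continuous_pow 2).sub continuous_id).add continuous_const
    have hc1 : Continuous (fun x : ℝ => (1 - x) * (x ^ 2 - x + 1)⁻¹) :=
      (continuous_const.sub continuous_id).mul (hcden.inv₀ (fun x => (hd x).ne'))
    have hc2 : Continuous (fun x : ℝ => x * (x ^ 2 - x + 1)⁻¹) :=
      continuous_id.mul (hcden.inv₀ (fun x => (hd x).ne'))
    -- reflection
    have hrefl : (∫ x in (0:ℝ)..1, (1 - x) * (x ^ 2 - x + 1)⁻¹)
        = ∫ x in (0:ℝ)..1, x * (x ^ 2 - x + 1)⁻¹ := by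
      have := intervalIntegral.integral_comp_sub_left
        (a := 0) (b := 1) (fun y : ℝ => y * (y ^ 2 - y + 1)⁻¹) 1
      norm_num at this
      rw [← this]
      refine intervalIntegral.integral_congr (fun x _ => ?_)
      have : (1 - x) ^ 2 - (1 - x) + 1 = x ^ 2 - x + 1 := by ring
      rw [this]
    have hsum : (∫ x in (0:ℝ)..1, (1 - x) * (x ^ 2 - x + 1)⁻¹)
        + (∫ x in (0:ℝ)..1, x * (x ^ 2 - x + 1)⁻¹)
        = ∫ x in (0:ℝ)..1, 1 / (x ^ 2 + (-1) * x + 1) := by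
      rw [← intervalIntegral.integral_add (hc1.intervalIntegrable 0 1)
        (hc2.intervalIntegrable 0 1)]
      refine intervalIntegral.integral_congr (fun x _ => ?_)
      rw [← add_mul]
      have h1 : (1 - x) + x = 1 := by ring
      have h2 : x ^ 2 + (-1) * x + 1 = x ^ 2 - x + 1 := by ring
      rw [h1, one_mul, h2, one_div]
    rw [key_integrals] at hsum
    have hJ : (∫ x in (0:ℝ)..1, 1 / (x ^ 2 + 1 * x + 1))
        = ∫ x in (0:ℝ)..1, (x ^ 2 + x + 1)⁻¹ := by
      refine intervalIntegral.integral_congr (fun x _ => ?_)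
      rw [one_mul, one_div]
    rw [hJ] at hsum
    rw [hrefl] at hsum ⊢
    linarith
  calc (∑' k : ℕ, 1 / (((k + 1 : ℕ) : ℝ) * (Nat.choose (2 * (k + 1)) (k + 1) : ℝ)))
      = ∑' k : ℕ, ∫ x, f k x ∂μ := by
        refine tsum_congr (fun k => ?_)
        rw [hfval k]
    _ = ∫ x, (∑' k, f k x) ∂μ := hLex
    _ = ∫ x, (∑' n, g n x) ∂μ := by rw [hLpt, hRpt, hII]
    _ = ∑' n : ℕ, ∫ x, g n x ∂μ := hRex.symm
    _ = ∑' n : ℕ, (1 / ((3 * (n : ℝ) + 1)) - 1 / ((3 * (n : ℝ) + 2))) := by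
        refine tsum_congr (fun n => ?_)
        rw [hgval n]
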